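/- Let 𝒜 = ℂ[E₁,E₂,A₀,A₁] with the derivation f as above, δ = 4E₂ − E₁² and v = A₀ − (1/2)E₁A₁. If j, m, n are natural numbers with m − n − 4j ≥ 0 and m − n − 4j even, then f^{m−n−4j+1}(δʲ A₁^m v^n) = 0. -/
import Mathlib


open MvPolynomial

section AuxDerivation

variable {R A : Type*} [CommSemiring R] [CommRing A] [Algebra R A]

lemma pow_apply_succ_aux (d : Derivation R A A) (t : ℕ) (x : A) :
    (d.toLinearMap ^ (t + 1)) x = (d.toLinearMap ^ t) (d x) := by
  rw [pow_succ, Module.End.mul_apply]; rfl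

lemma eigen_pow_aux (d : Derivation R A A) (a p : A) (h : d a = p * a) (t : ℕ) :
    d (a ^ t) = (t : A) * p * a ^ t := by
  induction t with
  | zero => simp
  | succ t ih =>
    rw [pow_succ, Derivation.leibniz, ih, h, smul_eq_mul, smul_eq_mul]
    push_cast
    ring

lemma iter_mul_const_aux (d : Derivation R A A) (w : A) (hw : d w = 0) :
    ∀ (r : ℕ) (a : A), (d.toLinearMap ^ r) (a * w) = (d.toLinearMap ^ r) a * w := by
  intro r
  induction r with
  | zero => intro a; simp
  | succ r ih =>
    intro a
    rw [pow_apply_succ_aux, pow_apply_succ_aux]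
    have : d (a * w) = d a * w := by
      rw [Derivation.leibniz, hw, smul_eq_mul, smul_eq_mul]
      ring
    rw [this]
    exact ih (d a)

lemma nilp_mul_aux (d : Derivation R A A) :
    ∀ (N p q : ℕ) (a b : A), p + q ≤ N →
      (d.toLinearMap ^ (p + 1)) a = 0 → (d.toLinearMap ^ (q + 1)) b = 0 →
      (d.toLinearMap ^ (p + q + 1)) (a * b) = 0 := by
  intro N
  induction N with
  | zero =>
    intro p q a b hpq ha hb
    have hp : p = 0 := by omega
    have hq : q = 0 := by omega
    subst hp; subst hq
    rw [pow_apply_succ_aux] at ha hb ⊢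
    simp only [pow_zero, Module.End.one_apply] at ha hb ⊢
    rw [Derivation.leibniz, ha, hb]; simp
  | succ N ih =>
    intro p q a b hpq ha hb
    have hstep : (d.toLinearMap ^ (p + q + 1)) (a * b)
        = (d.toLinearMap ^ (p + q)) (a * d b + b * d a) := by
      rw [pow_apply_succ_aux]
      congr 1
      rw [Derivation.leibniz, smul_eq_mul, smul_eq_mul]
    rw [hstep, map_add]
    have h1 : (d.toLinearMap ^ (p + q)) (a * d b) = 0 := by
      rcases q with _ | q'
      · rw [pow_apply_succ_aux, pow_zero, Module.End.one_apply] at hb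
        rw [hb, mul_zero, map_zero]
      · have hb' : (d.toLinearMap ^ (q' + 1)) (d b) = 0 := by
          rw [← pow_apply_succ_aux]; exact hb
        have key := ih p q' a (d b) (by omega) ha hb'
        have hexp : p + (q' + 1) = p + q' + 1 := by omega
        rw [hexp]; exact key
    have h2 : (d.toLinearMap ^ (p + q)) (b * d a) = 0 := by
      rcases p with _ | p'
      · rw [pow_apply_succ_aux, pow_zero, Module.End.one_apply] at ha
        rw [ha, mul_zero, map_zero]
      · have ha' : (d.toLinearMap ^ (p' + 1)) (d a) = 0 := by
          rw [← pow_apply_succ_aux]; exact ha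
        have key := ih q p' b (d a) (by omega) hb ha'
        have hexp : p' + 1 + q = q + p' + 1 := by omega
        rw [hexp]; exact key
    rw [h1, h2, add_zero]

lemma nilp_pow_aux (d : Derivation R A A) (u : A) (hu : (d.toLinearMap ^ 3) u = 0) :
    ∀ s : ℕ, (d.toLinearMap ^ (2 * s + 1)) (u ^ s) = 0 := by
  intro s
  induction s with
  | zero =>
    simp only [Nat.mul_zero, Nat.zero_add, pow_one, pow_zero]
    show d 1 = 0
    exact d.map_one_eq_zero
  | succ s ih =>
    have key := nilp_mul_aux d (2 + 2 * s) 2 (2 * s) u (u ^ s) le_rfl hu ih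
    have heq : u ^ (s + 1) = u * u ^ s := by ring
    have hexp : 2 * (s + 1) + 1 = 2 + 2 * s + 1 := by omega
    rw [heq, hexp]
    exact key

end AuxDerivation

/-- In `𝒜 = ℂ[E₁,E₂,A₀,A₁]` with the derivation `f` as in the skein
lasagna module of `B² × S²`, `δ = 4E₂ - E₁²` and `v = A₀ - (1/2)E₁A₁`, if `j, m, n : ℕ`
satisfy `m - n - 4j ≥ 0` with `m - n - 4j` even, then
`f^(m-n-4j+1)(δʲ A₁^m vⁿ) = 0`. Here `E₁ = X 0`, `E₂ = X 1`, `A₀ = X 2`, `A₁ = X 3`. -/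
theorem f_iterate_kills_delta_A1m_vn
    (f : Derivation ℂ (MvPolynomial (Fin 4) ℂ) (MvPolynomial (Fin 4) ℂ))
    (hf1 : f (X 0) = X 0 ^ 2 - 2 * X 1) (hf2 : f (X 1) = X 0 * X 1)
    (hf3 : f (X 2) = (1 / 2 : ℂ) • (X 0 * X 2) - X 1 * X 3)
    (hf4 : f (X 3) = -((1 / 2 : ℂ) • (X 0 * X 3)))
    (δ v : MvPolynomial (Fin 4) ℂ)
    (hδ : δ = 4 * X 1 - X 0 ^ 2) (hv : v = X 2 - (1 / 2 : ℂ) • (X 0 * X 3))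
    (j m n : ℕ) (hge : n + 4 * j ≤ m) (heven : Even (m - n - 4 * j)) :
    (f.toLinearMap ^ (m - n - 4 * j + 1)) (δ ^ j * X 3 ^ m * v ^ n) = 0 := by
  have hC2 : (C ((1/2:ℂ)) : MvPolynomial (Fin 4) ℂ) * 2 = 1 := by
    rw [← map_ofNat (C : ℂ →+* MvPolynomial (Fin 4) ℂ) 2, ← map_mul]
    norm_num
  -- eigenvector facts
  have hfδ : f δ = 2 * X 0 * δ := by
    rw [hδ, show (4:MvPolynomial (Fin 4) ℂ) * X 1 - X 0 ^ 2
        = X 1 + X 1 + X 1 + X 1 - X 0 ^ 2 by ring]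
    rw [map_sub, map_add, map_add, map_add, Derivation.leibniz_pow, hf1, hf2]
    simp only [smul_eq_mul, nsmul_eq_mul]
    push_cast
    ring
  have hfv : f v = C ((1/2 : ℂ)) * X 0 * v := by
    rw [hv, map_sub, Derivation.map_smul, Derivation.leibniz, hf1, hf3, hf4]
    simp only [smul_eq_mul, smul_eq_C_mul]
    linear_combination (X 1 * X 3 + C ((1/2:ℂ)) * X 0 ^ 2 * X 3) * hC2
  have hfX3 : f (X 3) = -(C ((1/2 : ℂ))) * X 0 * X 3 := by
    rw [hf4, smul_eq_C_mul]
    ring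
  -- the vector W is killed by f
  set W : MvPolynomial (Fin 4) ℂ := δ ^ j * X 3 ^ (n + 4 * j) * v ^ n with hWdef
  have hW : f W = 0 := by
    rw [hWdef, Derivation.leibniz, Derivation.leibniz,
      eigen_pow_aux f δ (2 * X 0) hfδ j,
      eigen_pow_aux f (X 3) (-(C ((1/2 : ℂ))) * X 0) hfX3 (n + 4 * j),
      eigen_pow_aux f v (C ((1/2 : ℂ)) * X 0) hfv n]
    simp only [smul_eq_mul]
    push_cast
    linear_combination (-2 * (j : MvPolynomial (Fin 4) ℂ) * X 0 * δ ^ j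
      * X 3 ^ (n + 4 * j) * v ^ n) * hC2
  -- f^3 kills X 3 ^ 2
  have hX3sq : f (X 3 ^ 2) = -(X 0 * X 3 ^ 2) := by
    rw [Derivation.leibniz_pow, hf4]
    simp only [smul_eq_C_mul, smul_eq_mul, nsmul_eq_mul]
    push_cast
    linear_combination (-(X 0 * X 3 ^ 2)) * hC2
  have e2 : f (X 0 * X 3 ^ 2) = -(X 1 * X 3 ^ 2) - X 1 * X 3 ^ 2 := by
    rw [Derivation.leibniz, hX3sq, hf1]
    simp only [smul_eq_mul]
    ring
  have e3 : f (X 1 * X 3 ^ 2) = 0 := by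
    rw [Derivation.leibniz, hX3sq, hf2]
    simp only [smul_eq_mul]
    ring
  have hcube : (f.toLinearMap ^ 3) ((X 3 : MvPolynomial (Fin 4) ℂ) ^ 2) = 0 := by
    show (f.toLinearMap ^ (2 + 1)) ((X 3 : MvPolynomial (Fin 4) ℂ) ^ 2) = 0
    rw [pow_apply_succ_aux]
    show (f.toLinearMap ^ (1 + 1)) (f ((X 3 : MvPolynomial (Fin 4) ℂ) ^ 2)) = 0
    rw [pow_apply_succ_aux]
    show (f.toLinearMap ^ (0 + 1)) (f (f ((X 3 : MvPolynomial (Fin 4) ℂ) ^ 2))) = 0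
    rw [pow_apply_succ_aux, pow_zero, Module.End.one_apply]
    rw [hX3sq, map_neg, e2]
    have : -(-(X 1 * X 3 ^ 2) - X 1 * X 3 ^ 2)
        = (X 1 * X 3 ^ 2 + X 1 * X 3 ^ 2 : MvPolynomial (Fin 4) ℂ) := by ring
    rw [this, map_add, e3]
    simp
  -- split the product
  obtain ⟨s, hs⟩ := heven
  have hX3m : (X 3 : MvPolynomial (Fin 4) ℂ) ^ m
      = X 3 ^ (m - n - 4 * j) * X 3 ^ (n + 4 * j) := by
    rw [← pow_add]
    congr 1
    omega
  have hprod : δ ^ j * X 3 ^ m * v ^ n = X 3 ^ (m - n - 4 * j) * W := by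
    rw [hX3m, hWdef]; ring
  rw [hprod, iter_mul_const_aux f W hW]
  have hpow2 : (X 3 : MvPolynomial (Fin 4) ℂ) ^ (m - n - 4 * j)
      = ((X 3 : MvPolynomial (Fin 4) ℂ) ^ 2) ^ s := by
    rw [← pow_mul]
    congr 1
    omega
  rw [hpow2, show m - n - 4 * j + 1 = 2 * s + 1 by omega,
    nilp_pow_aux f (X 3 ^ 2) hcube s, zero_mul]
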